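/- Let q ∈ ℂ with q ≠ 0. The family of elements of A_q given by a_{k,m,n,ℓ} = (α*)^k · (β*)^m · β^n · z^ℓ for integers k, m, n, ℓ ≥ 0, together with a_{k,m,n,ℓ} = α^{−k} · (β*)^m · β^n · z^ℓ for integers k < 0 and m, n, ℓ ≥ 0, is a ℂ-linear basis of A_q (it spans A_q and is linearly independent over ℂ). -/

import Mathlib

set_option linter.unusedSectionVars false
set_option maxHeartbeats 1000000

/-- The relations (s4rel) defining the quantum 4-sphere `S⁴_q`:
`z* = z`, `zα = αz`, `zβ = βz`, `βα = conj(q)·αβ`, `β*α = q·αβ*`, `ββ* = β*β`,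
`α*α + |q|²·β*β + z² = 1`, `αα* + ββ* + z² = 1`, where `|q|² = q·conj q`. -/
def S4Rel {A : Type*} [Ring A] [Algebra ℂ A] [StarRing A] [StarModule ℂ A]
    (q : ℂ) (α β z : A) : Prop :=
  star z = z ∧ z * α = α * z ∧ z * β = β * z ∧
    β * α = (starRingEnd ℂ) q • (α * β) ∧
    star β * α = q • (α * star β) ∧
    β * star β = star β * β ∧
    star α * α + (q * (starRingEnd ℂ) q) • (star β * β) + z ^ 2 = 1 ∧
    α * star α + β * star β + z ^ 2 = 1

/-- `A` (with marked elements `α, β, z`) is *the* universal unital complex *-algebra on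
generators `α, β, z` subject to the relations (s4rel) with parameter `q`, i.e. the
algebra `A_q` of the quantum 4-sphere `S⁴_q`: the generators satisfy the relations, and
for any unital complex *-algebra with elements satisfying the relations there is a unique
unital *-algebra homomorphism sending generators to those elements. -/
def IsUniversalS4 (q : ℂ) (A : Type) [Ring A] [Algebra ℂ A] [StarRing A]
    [StarModule ℂ A] (α β z : A) : Prop :=
  S4Rel q α β z ∧
    ∀ (B : Type) [Ring B] [Algebra ℂ B] [StarRing B] [StarModule ℂ B],
      ∀ a b c : B, S4Rel q a b c →
        ∃! φ : A →⋆ₐ[ℂ] B, φ α = a ∧ φ β = b ∧ φ z = c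

namespace S4Aux



abbrev I4 : Type := ℤ × ℕ × ℕ × ℕ
abbrev W : Type := I4 →₀ ℂ

noncomputable def e (i : I4) : W := Finsupp.single i 1

noncomputable def lc (f : I4 → W) : Module.End ℂ W := Finsupp.linearCombination ℂ f

@[simp] lemma lc_e (f : I4 → W) (i : I4) : lc f (e i) = f i := by
  simp [lc, e, Finsupp.linearCombination_single]

lemma end_ext {f g : Module.End ℂ W} (h : ∀ i, f (e i) = g (e i)) : f = g := by
  refine Module.Basis.ext (Finsupp.basisSingleOne) fun i => ?_
  simpa [Finsupp.basisSingleOne, e] using h i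

noncomputable def Lz : Module.End ℂ W := lc fun i => e (i.1, i.2.1, i.2.2.1, i.2.2.2 + 1)
noncomputable def Lb (q : ℂ) : Module.End ℂ W :=
  lc fun i => ((starRingEnd ℂ) q) ^ (-i.1) • e (i.1, i.2.1, i.2.2.1 + 1, i.2.2.2)
noncomputable def Lbs (q : ℂ) : Module.End ℂ W :=
  lc fun i => q ^ (-i.1) • e (i.1, i.2.1 + 1, i.2.2.1, i.2.2.2)
noncomputable def Las (q : ℂ) : Module.End ℂ W := lc fun i =>
  if 0 ≤ i.1 then e (i.1 + 1, i.2.1, i.2.2.1, i.2.2.2)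
  else e (i.1 + 1, i.2.1, i.2.2.1, i.2.2.2)
    - (q * (starRingEnd ℂ) q) ^ (-i.1) • e (i.1 + 1, i.2.1 + 1, i.2.2.1 + 1, i.2.2.2)
    - e (i.1 + 1, i.2.1, i.2.2.1, i.2.2.2 + 2)
noncomputable def La (q : ℂ) : Module.End ℂ W := lc fun i =>
  if i.1 ≤ 0 then e (i.1 - 1, i.2.1, i.2.2.1, i.2.2.2)
  else e (i.1 - 1, i.2.1, i.2.2.1, i.2.2.2)
    - (q * (starRingEnd ℂ) q) ^ (1 - i.1) • e (i.1 - 1, i.2.1 + 1, i.2.2.1 + 1, i.2.2.2)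
    - e (i.1 - 1, i.2.1, i.2.2.1, i.2.2.2 + 2)

variable {q : ℂ}

lemma hqc (hq : q ≠ 0) : (starRingEnd ℂ) q ≠ 0 := by simpa using hq
lemma hqq (hq : q ≠ 0) : q * (starRingEnd ℂ) q ≠ 0 := mul_ne_zero hq (hqc hq)


lemma id1 : Lz * La q = La q * Lz := by
  apply end_ext; rintro ⟨k, m, n, l⟩
  by_cases hk : k ≤ 0 <;>
    simp [Module.End.mul_apply, Lz, La, hk, map_sub, map_smul]

lemma id2 : Lz * Las q = Las q * Lz := by
  apply end_ext; rintro ⟨k, m, n, l⟩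
  by_cases hk : 0 ≤ k <;>
    simp [Module.End.mul_apply, Lz, Las, hk, map_sub, map_smul]

lemma id3 : Lz * Lb q = Lb q * Lz := by
  apply end_ext; rintro ⟨k, m, n, l⟩
  simp [Module.End.mul_apply, Lz, Lb, map_smul]

lemma id4 : Lz * Lbs q = Lbs q * Lz := by
  apply end_ext; rintro ⟨k, m, n, l⟩
  simp [Module.End.mul_apply, Lz, Lbs, map_smul]

lemma id9 : Lb q * Lbs q = Lbs q * Lb q := by
  apply end_ext; rintro ⟨k, m, n, l⟩
  simp [Module.End.mul_apply, Lb, Lbs, map_smul, smul_smul, mul_comm]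

lemma id5 (hq : q ≠ 0) : Lb q * La q = (starRingEnd ℂ) q • (La q * Lb q) := by
  apply end_ext; rintro ⟨k, m, n, l⟩
  by_cases hk : k ≤ 0 <;>
  · simp only [Module.End.mul_apply, LinearMap.smul_apply, Lb, La, hk, if_pos, if_neg,
      if_true, if_false, lc_e, map_sub, map_smul, smul_sub, smul_smul]
    match_scalars
    all_goals try simp only [neg_sub, zpow_sub₀ hq, zpow_sub₀ (hqc hq), zpow_sub₀ (hqq hq),
      zpow_add₀ hq, zpow_add₀ (hqc hq), zpow_add₀ (hqq hq),
      zpow_one, zpow_neg_one, zpow_neg, div_eq_mul_inv, mul_zpow, mul_inv]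
    all_goals try ring_nf
    all_goals simp [mul_assoc, mul_inv_cancel₀ hq, mul_inv_cancel₀ (hqc hq),
      inv_mul_cancel₀ hq, inv_mul_cancel₀ (hqc hq)]

lemma id7 (hq : q ≠ 0) : Lbs q * La q = q • (La q * Lbs q) := by
  apply end_ext; rintro ⟨k, m, n, l⟩
  by_cases hk : k ≤ 0 <;>
  · simp only [Module.End.mul_apply, LinearMap.smul_apply, Lbs, La, hk, if_true, if_false,
      lc_e, map_sub, map_smul, smul_sub, smul_smul]
    match_scalars
    all_goals try simp only [neg_sub, zpow_sub₀ hq, zpow_sub₀ (hqc hq), zpow_sub₀ (hqq hq),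
      zpow_add₀ hq, zpow_add₀ (hqc hq), zpow_add₀ (hqq hq),
      zpow_one, zpow_neg_one, zpow_neg, div_eq_mul_inv, mul_zpow, mul_inv]
    all_goals try ring_nf
    all_goals simp [mul_assoc, mul_inv_cancel₀ hq, mul_inv_cancel₀ (hqc hq),
      inv_mul_cancel₀ hq, inv_mul_cancel₀ (hqc hq)]

lemma id6 (hq : q ≠ 0) : Las q * Lbs q = q • (Lbs q * Las q) := by
  apply end_ext; rintro ⟨k, m, n, l⟩
  by_cases hk : 0 ≤ k <;>
  · simp only [Module.End.mul_apply, LinearMap.smul_apply, Lbs, Las, hk, if_true, if_false,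
      lc_e, map_sub, map_smul, smul_sub, smul_smul]
    match_scalars
    all_goals try simp only [neg_sub, zpow_sub₀ hq, zpow_sub₀ (hqc hq), zpow_sub₀ (hqq hq),
      zpow_add₀ hq, zpow_add₀ (hqc hq), zpow_add₀ (hqq hq),
      zpow_one, zpow_neg_one, zpow_neg, div_eq_mul_inv, mul_zpow, mul_inv]
    all_goals try ring_nf
    all_goals simp [mul_assoc, mul_inv_cancel₀ hq, mul_inv_cancel₀ (hqc hq),
      inv_mul_cancel₀ hq, inv_mul_cancel₀ (hqc hq)]

lemma id8 (hq : q ≠ 0) : Las q * Lb q = (starRingEnd ℂ) q • (Lb q * Las q) := by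
  apply end_ext; rintro ⟨k, m, n, l⟩
  by_cases hk : 0 ≤ k <;>
  · simp only [Module.End.mul_apply, LinearMap.smul_apply, Lb, Las, hk, if_true, if_false,
      lc_e, map_sub, map_smul, smul_sub, smul_smul]
    match_scalars
    all_goals try simp only [neg_sub, zpow_sub₀ hq, zpow_sub₀ (hqc hq), zpow_sub₀ (hqq hq),
      zpow_add₀ hq, zpow_add₀ (hqc hq), zpow_add₀ (hqq hq),
      zpow_one, zpow_neg_one, zpow_neg, div_eq_mul_inv, mul_zpow, mul_inv]
    all_goals try ring_nf
    all_goals simp [mul_assoc, mul_inv_cancel₀ hq, mul_inv_cancel₀ (hqc hq),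
      inv_mul_cancel₀ hq, inv_mul_cancel₀ (hqc hq)]

lemma id10 (hq : q ≠ 0) :
    Las q * La q + (q * (starRingEnd ℂ) q) • (Lbs q * Lb q) + Lz * Lz = 1 := by
  apply end_ext; rintro ⟨k, m, n, l⟩
  by_cases hk : k ≤ 0
  · have hk1 : ¬ (0 ≤ k - 1) := by omega
    simp only [Module.End.mul_apply, LinearMap.add_apply, LinearMap.smul_apply,
      Module.End.one_apply, La, Las, Lb, Lbs, Lz, hk, hk1, if_true, if_false,
      lc_e, map_sub, map_smul, smul_sub, smul_smul]
    ring_nf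
    match_scalars
    all_goals try simp only [neg_sub, zpow_sub₀ hq, zpow_sub₀ (hqc hq), zpow_sub₀ (hqq hq),
      zpow_add₀ hq, zpow_add₀ (hqc hq), zpow_add₀ (hqq hq),
      zpow_one, zpow_neg_one, zpow_neg, div_eq_mul_inv, mul_zpow, mul_inv]
    all_goals try ring_nf
    all_goals simp [mul_assoc, mul_inv_cancel₀ hq, mul_inv_cancel₀ (hqc hq),
      inv_mul_cancel₀ hq, inv_mul_cancel₀ (hqc hq)]
  · have hk1 : 0 ≤ k - 1 := by omega
    simp only [Module.End.mul_apply, LinearMap.add_apply, LinearMap.smul_apply,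
      Module.End.one_apply, La, Las, Lb, Lbs, Lz, hk, hk1, if_true, if_false,
      lc_e, map_sub, map_smul, smul_sub, smul_smul]
    ring_nf
    match_scalars
    all_goals try simp only [neg_sub, zpow_sub₀ hq, zpow_sub₀ (hqc hq), zpow_sub₀ (hqq hq),
      zpow_add₀ hq, zpow_add₀ (hqc hq), zpow_add₀ (hqq hq),
      zpow_one, zpow_neg_one, zpow_neg, div_eq_mul_inv, mul_zpow, mul_inv]
    all_goals try ring_nf
    all_goals simp [mul_assoc, mul_inv_cancel₀ hq, mul_inv_cancel₀ (hqc hq),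
      inv_mul_cancel₀ hq, inv_mul_cancel₀ (hqc hq)]

lemma id11 (hq : q ≠ 0) : La q * Las q + Lb q * Lbs q + Lz * Lz = 1 := by
  apply end_ext; rintro ⟨k, m, n, l⟩
  by_cases hk : 0 ≤ k
  · have hk1 : ¬ (k + 1 ≤ 0) := by omega
    simp only [Module.End.mul_apply, LinearMap.add_apply, LinearMap.smul_apply,
      Module.End.one_apply, La, Las, Lb, Lbs, Lz, hk, hk1, if_true, if_false,
      lc_e, map_sub, map_smul, smul_sub, smul_smul]
    ring_nf
    match_scalars
    all_goals try simp only [neg_sub, zpow_sub₀ hq, zpow_sub₀ (hqc hq), zpow_sub₀ (hqq hq),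
      zpow_add₀ hq, zpow_add₀ (hqc hq), zpow_add₀ (hqq hq),
      zpow_one, zpow_neg_one, zpow_neg, div_eq_mul_inv, mul_zpow, mul_inv]
    all_goals try ring_nf
    all_goals simp [mul_assoc, mul_inv_cancel₀ hq, mul_inv_cancel₀ (hqc hq),
      inv_mul_cancel₀ hq, inv_mul_cancel₀ (hqc hq)]
  · have hk1 : k + 1 ≤ 0 := by omega
    simp only [Module.End.mul_apply, LinearMap.add_apply, LinearMap.smul_apply,
      Module.End.one_apply, La, Las, Lb, Lbs, Lz, hk, hk1, if_true, if_false,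
      lc_e, map_sub, map_smul, smul_sub, smul_smul]
    ring_nf
    match_scalars
    all_goals try simp only [neg_sub, zpow_sub₀ hq, zpow_sub₀ (hqc hq), zpow_sub₀ (hqq hq),
      zpow_add₀ hq, zpow_add₀ (hqc hq), zpow_add₀ (hqq hq),
      zpow_one, zpow_neg_one, zpow_neg, div_eq_mul_inv, mul_zpow, mul_inv]
    all_goals try ring_nf
    all_goals simp [mul_assoc, mul_inv_cancel₀ hq, mul_inv_cancel₀ (hqc hq),
      inv_mul_cancel₀ hq, inv_mul_cancel₀ (hqc hq)]




abbrev EW : Type := Module.End ℂ W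

def BB : Type := EW × EWᵐᵒᵖ

noncomputable instance : Ring BB := inferInstanceAs (Ring (EW × EWᵐᵒᵖ))

def mkB (f g : EW) : BB := (f, MulOpposite.op g)

lemma mkB_surj (x : BB) : ∃ f g, x = mkB f g := by
  obtain ⟨f, g⟩ := x; exact ⟨f, g.unop, rfl⟩

@[simp] lemma mkB_mul (f g f' g' : EW) : mkB f g * mkB f' g' = mkB (f * f') (g' * g) := rfl
@[simp] lemma mkB_add (f g f' g' : EW) : mkB f g + mkB f' g' = mkB (f + f') (g + g') := rfl
@[simp] lemma mkB_one : (1 : BB) = mkB 1 1 := rfl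
@[simp] lemma mkB_inj {f g f' g' : EW} : mkB f g = mkB f' g' ↔ f = f' ∧ g = g' := by
  constructor
  · intro h
    exact ⟨congrArg Prod.fst h, MulOpposite.op_injective (congrArg Prod.snd h)⟩
  · rintro ⟨rfl, rfl⟩; rfl

noncomputable instance : SMul ℂ BB :=
  ⟨fun c x => (c • x.1, MulOpposite.op ((starRingEnd ℂ) c • x.2.unop))⟩

@[simp] lemma mkB_smul (c : ℂ) (f g : EW) :
    c • mkB f g = mkB (c • f) ((starRingEnd ℂ) c • g) := rfl

noncomputable instance : Module ℂ BB where
  one_smul x := by obtain ⟨f, g, rfl⟩ := mkB_surj x; simp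
  mul_smul c d x := by obtain ⟨f, g, rfl⟩ := mkB_surj x; simp [mul_smul]
  smul_zero c := by
    have : (0 : BB) = mkB 0 0 := rfl
    simp [this]
  smul_add c x y := by
    obtain ⟨f, g, rfl⟩ := mkB_surj x; obtain ⟨f', g', rfl⟩ := mkB_surj y; simp
  add_smul c d x := by obtain ⟨f, g, rfl⟩ := mkB_surj x; simp [add_smul, map_add]
  zero_smul x := by
    obtain ⟨f, g, rfl⟩ := mkB_surj x
    have : (0 : BB) = mkB 0 0 := rfl
    simp [this]

noncomputable instance : Algebra ℂ BB :=
  Algebra.ofModule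
    (fun c x y => by
      obtain ⟨f, g, rfl⟩ := mkB_surj x; obtain ⟨f', g', rfl⟩ := mkB_surj y
      simp [smul_mul_assoc, mul_smul_comm])
    (fun c x y => by
      obtain ⟨f, g, rfl⟩ := mkB_surj x; obtain ⟨f', g', rfl⟩ := mkB_surj y
      simp [smul_mul_assoc, mul_smul_comm])

noncomputable instance : StarRing BB where
  star x := (x.2.unop, MulOpposite.op x.1)
  star_involutive x := rfl
  star_mul x y := rfl
  star_add x y := rfl

@[simp] lemma mkB_star (f g : EW) : star (mkB f g) = mkB g f := rfl

noncomputable instance : StarModule ℂ BB where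
  star_smul c x := by
    obtain ⟨f, g, rfl⟩ := mkB_surj x
    simp [Complex.conj_conj]

@[simp] lemma mkB_pow (f g : EW) (n : ℕ) : mkB f g ^ n = mkB (f ^ n) (g ^ n) := by
  induction n with
  | zero => simp [pow_zero]
  | succ n ih => rw [pow_succ, ih, mkB_mul, ← pow_succ, ← pow_succ']


end S4Aux



namespace S4Aux

section ASide

variable {A : Type} [Ring A] [Algebra ℂ A] [StarRing A] [StarModule ℂ A]
variable {q : ℂ} {α β z : A}

/-- move a generator right past a power -/
lemma sc_mul {g x : A} {c : ℂ} (h : g * x = c • (x * g)) (j : ℕ) :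
    g * x ^ j = c ^ j • (x ^ j * g) := by
  induction j with
  | zero => simp
  | succ j ih =>
    rw [pow_succ, ← mul_assoc, ih, smul_mul_assoc, mul_assoc, h, mul_smul_comm,
      smul_smul, ← mul_assoc, ← pow_succ, ← pow_succ]

variable (hrel : S4Rel q α β z) (hq : q ≠ 0)
include hrel

-- basic derived relations
lemma hza : z * α = α * z := hrel.2.1
lemma hzb : z * β = β * z := hrel.2.2.1
lemma hzz : star z = z := hrel.1

lemma hzas : z * star α = star α * z := by
  have := congrArg star hrel.2.1
  simp only [star_mul, hrel.1] at this
  exact this.symm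

lemma hzbs : z * star β = star β * z := by
  have := congrArg star hrel.2.2.1
  simp only [star_mul, hrel.1] at this
  exact this.symm

lemma hasb : star α * β = (starRingEnd ℂ) q • (β * star α) := by
  have := congrArg star hrel.2.2.2.2.1
  simpa only [star_mul, star_star, star_smul, Complex.star_def, Complex.conj_conj, RingHom.coe_coe] using this

lemma hasbs : star α * star β = q • (star β * star α) := by
  have := congrArg star hrel.2.2.2.1
  simpa only [star_mul, star_star, star_smul, Complex.star_def, Complex.conj_conj, RingHom.coe_coe] using this

include hq in
lemma hbas : β * star α = (((starRingEnd ℂ) q)⁻¹ : ℂ) • (star α * β) := by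
  have hc : (starRingEnd ℂ) q ≠ 0 := by simpa using hq
  rw [eq_comm, inv_smul_eq_iff₀ hc]
  exact hasb hrel

include hq in
lemma hbsas : star β * star α = (q⁻¹ : ℂ) • (star α * star β) := by
  rw [eq_comm, inv_smul_eq_iff₀ hq]
  exact hasbs hrel

lemma hbsba : (star β * β) * α = (q * (starRingEnd ℂ) q) • (α * (star β * β)) := by
  rw [mul_assoc, hrel.2.2.2.1, mul_smul_comm, ← mul_assoc, hrel.2.2.2.2.1,
    smul_mul_assoc, smul_smul, mul_assoc, mul_comm q]

include hq in
lemma hbsbas : (star β * β) * star α = ((q * (starRingEnd ℂ) q)⁻¹ : ℂ) • (star α * (star β * β)) := by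
  rw [mul_assoc, hbas hrel hq, mul_smul_comm, ← mul_assoc, hbsas hrel hq,
    smul_mul_assoc, smul_smul, mul_assoc, mul_inv, mul_comm q⁻¹]

lemma r1 : α * star α = 1 - star β * β - z ^ 2 := by
  have h := hrel.2.2.2.2.2.2.2
  rw [hrel.2.2.2.2.2.1] at h
  rw [eq_sub_iff_add_eq, eq_sub_iff_add_eq]
  linear_combination (norm := abel) h

lemma r2 : star α * α = 1 - (q * (starRingEnd ℂ) q) • (star β * β) - z ^ 2 := by
  have h := hrel.2.2.2.2.2.2.1
  rw [eq_sub_iff_add_eq, eq_sub_iff_add_eq]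
  linear_combination (norm := abel) h

end ASide

end S4Aux

namespace S4Aux2
section ASide2

variable {A : Type} [Ring A] [Algebra ℂ A] [StarRing A] [StarModule ℂ A]
variable {q : ℂ} {α β z : A}

open S4Aux

-- scalar helpers
lemma zinv (c : ℂ) (k : ℤ) (hk : 0 ≤ k) : (c⁻¹) ^ k.toNat = c ^ (-k) := by
  rw [inv_pow, ← zpow_natCast, Int.toNat_of_nonneg hk, zpow_neg]

lemma znn (c : ℂ) (k : ℤ) (hk : k ≤ 0) : c ^ (-k).toNat = c ^ (-k) := by
  rw [← zpow_natCast, Int.toNat_of_nonneg (by omega)]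

/-- the `α`-part of the monomial -/
noncomputable def X (α : A) (k : ℤ) : A :=
  if 0 ≤ k then star α ^ k.toNat else α ^ (-k).toNat

/-- the commutative tail of the monomial -/
noncomputable def S (β z : A) (m n l : ℕ) : A := star β ^ m * (β ^ n * z ^ l)

lemma hXpos {k : ℤ} (hk : 0 ≤ k) : X α k = star α ^ k.toNat := if_pos hk

lemma hXneg {k : ℤ} (hk : k ≤ 0) : X α k = α ^ (-k).toNat := by
  rcases eq_or_lt_of_le hk with h | h
  · subst h; simp [X]
  · rw [X, if_neg (by omega)]

variable (hrel : S4Rel q α β z) (hq : q ≠ 0)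
include hrel

-- commutes
lemma Cza : Commute z α := hrel.2.1
lemma Czb : Commute z β := hrel.2.2.1
lemma Czas : Commute z (star α) := hzas hrel
lemma Czbs : Commute z (star β) := hzbs hrel
lemma Cbbs : Commute β (star β) := hrel.2.2.2.2.2.1

lemma CzX (k : ℤ) : Commute z (X α k) := by
  rw [X]; split
  · exact (Czas hrel).pow_right _
  · exact (Cza hrel).pow_right _

lemma Sz' (m n l t : ℕ) : z ^ t * S β z m n l = S β z m n (l + t) := by
  rw [S, S, ← mul_assoc, ((Czbs hrel).pow_pow t m).eq, mul_assoc, ← mul_assoc (z ^ t),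
    ((Czb hrel).pow_pow t n).eq, mul_assoc, ← pow_add, add_comm t l]

lemma Sb' (m n l : ℕ) : β * S β z m n l = S β z m (n + 1) l := by
  rw [S, S, ← mul_assoc, ((Cbbs hrel).pow_right m).eq, mul_assoc, ← mul_assoc β,
    ← pow_succ']

lemma Sbs' (m n l : ℕ) : star β * S β z m n l = S β z (m + 1) n l := by
  rw [S, S, ← mul_assoc, ← pow_succ']

lemma Sbb' (m n l : ℕ) : (star β * β) * S β z m n l = S β z (m + 1) (n + 1) l := by
  rw [mul_assoc, Sb' hrel, Sbs' hrel]

lemma Mz (k : ℤ) (m n l : ℕ) :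
    z * (X α k * S β z m n l) = X α k * S β z m n (l + 1) := by
  have h1 := Sz' hrel (β := β) (m := m) (n := n) (l := l) (t := 1)
  rw [pow_one] at h1
  rw [← mul_assoc, (CzX hrel k).eq, mul_assoc, h1]

include hq

lemma Mb (k : ℤ) (m n l : ℕ) :
    β * (X α k * S β z m n l) =
      ((starRingEnd ℂ) q) ^ (-k) • (X α k * S β z m (n + 1) l) := by
  by_cases hk : 0 ≤ k
  · rw [hXpos hk, ← mul_assoc, sc_mul (hbas hrel hq), zinv _ _ hk, smul_mul_assoc,
      mul_assoc, Sb' hrel]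
  · rw [hXneg (le_of_not_ge hk), ← mul_assoc, sc_mul hrel.2.2.2.1,
      znn _ _ (le_of_not_ge hk), smul_mul_assoc, mul_assoc, Sb' hrel]

lemma Mbs (k : ℤ) (m n l : ℕ) :
    star β * (X α k * S β z m n l) = q ^ (-k) • (X α k * S β z (m + 1) n l) := by
  by_cases hk : 0 ≤ k
  · rw [hXpos hk, ← mul_assoc, sc_mul (hbsas hrel hq), zinv _ _ hk, smul_mul_assoc,
      mul_assoc, Sbs' hrel]
  · rw [hXneg (le_of_not_ge hk), ← mul_assoc, sc_mul hrel.2.2.2.2.1,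
      znn _ _ (le_of_not_ge hk), smul_mul_assoc, mul_assoc, Sbs' hrel]

omit hq in
lemma Mas_pos {k : ℤ} (hk : 0 ≤ k) (m n l : ℕ) :
    star α * (X α k * S β z m n l) = X α (k + 1) * S β z m n l := by
  rw [hXpos hk, hXpos (by omega : (0:ℤ) ≤ k + 1), ← mul_assoc, ← pow_succ',
    show (k + 1).toNat = k.toNat + 1 by omega]

lemma Mas_neg {k : ℤ} (hk : k < 0) (m n l : ℕ) :
    star α * (X α k * S β z m n l) =
      X α (k + 1) * S β z m n l
        - (q * (starRingEnd ℂ) q) ^ (-k) • (X α (k + 1) * S β z (m + 1) (n + 1) l)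
        - X α (k + 1) * S β z m n (l + 2) := by
  have hXk : X α k = α ^ ((-(k+1)).toNat + 1) := by
    rw [hXneg (by omega), show (-k).toNat = (-(k+1)).toNat + 1 by omega]
  have hX1 : X α (k + 1) = α ^ (-(k+1)).toNat := hXneg (by omega)
  set j' := (-(k+1)).toNat with hj'
  have hcoef : (q * (starRingEnd ℂ) q) ^ (-k) = ((q * (starRingEnd ℂ) q)) ^ (j' + 1) := by
    rw [← zpow_natCast, show (((j' + 1 : ℕ)) : ℤ) = -k by omega]
  rw [hXk, hX1, ← mul_assoc, pow_succ', ← mul_assoc, r2 hrel]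
  rw [sub_mul, sub_mul, sub_mul, one_mul, smul_mul_assoc, sc_mul (hbsba hrel), smul_smul]
  rw [sub_mul, smul_mul_assoc, mul_assoc (α ^ j'), Sbb' hrel, ← pow_succ', ← hcoef,
    ((Cza hrel).pow_pow 2 j').eq, mul_assoc (α ^ j'), Sz' hrel]

lemma Ma_neg {k : ℤ} (hk : k ≤ 0) (m n l : ℕ) :
    α * (X α k * S β z m n l) = X α (k - 1) * S β z m n l := by
  rw [hXneg hk, hXneg (by omega : k - 1 ≤ 0), ← mul_assoc, ← pow_succ',
    show (-(k - 1)).toNat = (-k).toNat + 1 by omega]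

lemma Ma_pos {k : ℤ} (hk : 0 < k) (m n l : ℕ) :
    α * (X α k * S β z m n l) =
      X α (k - 1) * S β z m n l
        - (q * (starRingEnd ℂ) q) ^ (1 - k) • (X α (k - 1) * S β z (m + 1) (n + 1) l)
        - X α (k - 1) * S β z m n (l + 2) := by
  have hXk : X α k = star α ^ ((k - 1).toNat + 1) := by
    rw [hXpos (by omega), show k.toNat = (k - 1).toNat + 1 by omega]
  have hX1 : X α (k - 1) = star α ^ (k - 1).toNat := hXpos (by omega)
  set t' := (k - 1).toNat with ht'
  have hcoef : ((q * (starRingEnd ℂ) q)⁻¹ : ℂ) ^ t' = (q * (starRingEnd ℂ) q) ^ (1 - k) := by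
    rw [zinv _ _ (by omega : (0:ℤ) ≤ k - 1), show -(k - 1) = 1 - k by ring]
  rw [hXk, hX1, ← mul_assoc, pow_succ', ← mul_assoc, r1 hrel]
  rw [sub_mul, sub_mul, sub_mul, one_mul, sc_mul (hbsbas hrel hq), hcoef]
  rw [sub_mul, smul_mul_assoc, mul_assoc (star α ^ t'), Sbb' hrel,
    ((Czas hrel).pow_pow 2 t').eq, mul_assoc (star α ^ t'), Sz' hrel]

end ASide2
end S4Aux2

namespace S4Aux

noncomputable def aB (q : ℂ) : BB := mkB (La q) (Las q)
noncomputable def bB (q : ℂ) : BB := mkB (Lb q) (Lbs q)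
noncomputable def cB : BB := mkB Lz Lz

lemma relB (q : ℂ) (hq : q ≠ 0) : S4Rel q (aB q) (bB q) cB := by
  refine ⟨rfl, ?_, ?_, ?_, ?_, ?_, ?_, ?_⟩
  · simp only [aB, cB, mkB_mul, mkB_inj]
    exact ⟨id1, id2.symm⟩
  · simp only [bB, cB, mkB_mul, mkB_inj]
    exact ⟨id3, id4.symm⟩
  · simp only [aB, bB, mkB_mul, mkB_smul, Complex.conj_conj, mkB_inj]
    exact ⟨id5 hq, id6 hq⟩
  · simp only [aB, bB, mkB_star, mkB_mul, mkB_smul, mkB_inj]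
    exact ⟨id7 hq, id8 hq⟩
  · simp only [bB, mkB_star, mkB_mul, mkB_inj]
    exact ⟨id9, id9⟩
  · simp only [aB, bB, cB, mkB_star, mkB_mul, mkB_smul, mkB_pow, mkB_add, mkB_one,
      map_mul, Complex.conj_conj, mkB_inj, pow_two]
    constructor
    · exact id10 hq
    · rw [mul_comm ((starRingEnd ℂ) q) q]
      exact id10 hq
  · simp only [aB, bB, cB, mkB_star, mkB_mul, mkB_smul, mkB_pow, mkB_add, mkB_one,
      mkB_inj, pow_two]
    exact ⟨id11 hq, id11 hq⟩

def fstB (x : BB) : EW := (show EW × EWᵐᵒᵖ from x).1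

@[simp] lemma fstB_mkB (f g : EW) : fstB (mkB f g) = f := rfl

noncomputable def F : BB →ₗ[ℂ] W where
  toFun x := fstB x (e (0, 0, 0, 0))
  map_add' x y := rfl
  map_smul' c x := rfl

-- power evaluation lemmas
lemma Lz_pow (t k m n l) : (Lz ^ t) (e (k, m, n, l)) = e (k, m, n, l + t) := by
  induction t generalizing l with
  | zero => simp
  | succ t ih =>
    have h1 : Lz (e (k, m, n, l)) = e (k, m, n, l + 1) := by simp [Lz]
    rw [pow_succ, Module.End.mul_apply, h1, ih (l + 1),
      show l + 1 + t = l + (t + 1) by omega]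

lemma Lb0_pow (q : ℂ) (t m n l) : (Lb q ^ t) (e (0, m, n, l)) = e (0, m, n + t, l) := by
  induction t generalizing n with
  | zero => simp
  | succ t ih =>
    have h1 : Lb q (e (0, m, n, l)) = e (0, m, n + 1, l) := by simp [Lb]
    rw [pow_succ, Module.End.mul_apply, h1, ih (n + 1),
      show n + 1 + t = n + (t + 1) by omega]

lemma Lbs0_pow (q : ℂ) (t m n l) : (Lbs q ^ t) (e (0, m, n, l)) = e (0, m + t, n, l) := by
  induction t generalizing m with
  | zero => simp
  | succ t ih =>
    have h1 : Lbs q (e (0, m, n, l)) = e (0, m + 1, n, l) := by simp [Lbs]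
    rw [pow_succ, Module.End.mul_apply, h1, ih (m + 1),
      show m + 1 + t = m + (t + 1) by omega]

lemma Las_pow (q : ℂ) (t : ℕ) (k : ℤ) (hk : 0 ≤ k) (m n l : ℕ) :
    (Las q ^ t) (e (k, m, n, l)) = e (k + t, m, n, l) := by
  induction t generalizing k with
  | zero => simp
  | succ t ih =>
    have h1 : Las q (e (k, m, n, l)) = e (k + 1, m, n, l) := by simp [Las, hk]
    rw [pow_succ, Module.End.mul_apply, h1, ih (k + 1) (by omega),
      show k + 1 + (t : ℤ) = k + ((t : ℤ) + 1) by ring]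
    norm_cast

lemma La_pow (q : ℂ) (t : ℕ) (k : ℤ) (hk : k ≤ 0) (m n l : ℕ) :
    (La q ^ t) (e (k, m, n, l)) = e (k - t, m, n, l) := by
  induction t generalizing k with
  | zero => simp
  | succ t ih =>
    have h1 : La q (e (k, m, n, l)) = e (k - 1, m, n, l) := by simp [La, hk]
    rw [pow_succ, Module.End.mul_apply, h1, ih (k - 1) (by omega),
      show k - 1 - (t : ℤ) = k - ((t : ℤ) + 1) by ring]
    norm_cast

lemma evalB (q : ℂ) (k : ℤ) (m n l : ℕ) :
    F ((if 0 ≤ k then star (aB q) ^ k.toNat else aB q ^ (-k).toNat) *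
        star (bB q) ^ m * bB q ^ n * cB ^ l) = e (k, m, n, l) := by
  by_cases hk : 0 ≤ k
  · rw [if_pos hk]
    simp only [aB, bB, cB, mkB_star, mkB_pow, mkB_mul, show ∀ x, F x = fstB x (e (0, 0, 0, 0)) from fun _ => rfl, fstB_mkB, LinearMap.coe_mk,
      AddHom.coe_mk, Module.End.mul_apply]
    rw [Lz_pow, Lb0_pow, Lbs0_pow, Las_pow q _ 0 le_rfl]
    simp [Int.toNat_of_nonneg hk]
  · rw [if_neg hk]
    simp only [aB, bB, cB, mkB_star, mkB_pow, mkB_mul, show ∀ x, F x = fstB x (e (0, 0, 0, 0)) from fun _ => rfl, fstB_mkB, LinearMap.coe_mk,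
      AddHom.coe_mk, Module.End.mul_apply]
    rw [Lz_pow, Lb0_pow, Lbs0_pow, La_pow q _ 0 le_rfl]
    simp only [zero_add, zero_sub]
    rw [Int.toNat_of_nonneg (by omega : (0:ℤ) ≤ -k), neg_neg]

lemma e_linearIndependent : LinearIndependent ℂ (e : I4 → W) := by
  have h := (Finsupp.basisSingleOne (R := ℂ) (ι := I4)).linearIndependent
  have : ⇑(Finsupp.basisSingleOne (R := ℂ) (ι := I4)) = (e : I4 → W) := by
    funext i; simp [e]
  rwa [this] at h

end S4Aux

/-- For `q ≠ 0`, the family `a_{k,m,n,ℓ} = (α*)^k (β*)^m β^n z^ℓ` (for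
`k ≥ 0`) and `a_{k,m,n,ℓ} = α^{-k} (β*)^m β^n z^ℓ` (for `k < 0`), with `m, n, ℓ ≥ 0`,
is a ℂ-linear basis of `A_q`: it is linearly independent over ℂ and spans `A_q`. -/
theorem s4_q_basis (q : ℂ) (hq : q ≠ 0)
    (A : Type) [Ring A] [Algebra ℂ A] [StarRing A] [StarModule ℂ A]
    (α β z : A) (h : IsUniversalS4 q A α β z)
    (a : ℤ × ℕ × ℕ × ℕ → A)
    (ha : ∀ (k : ℤ) (m n ℓ : ℕ), a (k, m, n, ℓ) =
      (if 0 ≤ k then star α ^ k.toNat else α ^ (-k).toNat) *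
        star β ^ m * β ^ n * z ^ ℓ) :
    LinearIndependent ℂ a ∧ Submodule.span ℂ (Set.range a) = ⊤ := by
  classical
  obtain ⟨hrel, huniv⟩ := h
  have hXS : ∀ (k : ℤ) (m n l : ℕ),
      a (k, m, n, l) = S4Aux2.X α k * S4Aux2.S β z m n l := by
    intro k m n l
    rw [ha, S4Aux2.X, S4Aux2.S, mul_assoc, mul_assoc]
  -- Linear independence via the concrete representation on `W`.
  obtain ⟨φ, ⟨hφa, hφb, hφc⟩, -⟩ :=
    huniv S4Aux.BB (S4Aux.aB q) (S4Aux.bB q) S4Aux.cB (S4Aux.relB q hq)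
  have key : ∀ i : S4Aux.I4,
      (S4Aux.F ∘ₗ φ.toAlgHom.toLinearMap) (a i) = S4Aux.e i := by
    rintro ⟨k, m, n, l⟩
    have : φ (a (k, m, n, l)) =
        (if 0 ≤ k then star (S4Aux.aB q) ^ k.toNat else S4Aux.aB q ^ (-k).toNat) *
          star (S4Aux.bB q) ^ m * S4Aux.bB q ^ n * S4Aux.cB ^ l := by
      rw [ha]
      simp only [map_mul, map_pow, map_star, apply_ite φ, hφa, hφb, hφc]
    simp only [LinearMap.coe_comp, Function.comp_apply, AlgHom.toLinearMap_apply,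
      StarAlgHom.coe_toAlgHom, this]
    exact S4Aux.evalB q k m n l
  have hind : LinearIndependent ℂ a := by
    apply LinearIndependent.of_comp (S4Aux.F ∘ₗ φ.toAlgHom.toLinearMap)
    have : (⇑(S4Aux.F ∘ₗ φ.toAlgHom.toLinearMap) ∘ a) = S4Aux.e := funext key
    rw [this]
    exact S4Aux.e_linearIndependent
  refine ⟨hind, ?_⟩
  -- Spanning.
  set P := Submodule.span ℂ (Set.range a) with hP
  have memP : ∀ i : ℤ × ℕ × ℕ × ℕ, a i ∈ P := fun i => Submodule.subset_span ⟨i, rfl⟩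
  have memP' : ∀ (k : ℤ) (m n l : ℕ), S4Aux2.X α k * S4Aux2.S β z m n l ∈ P := by
    intro k m n l
    rw [← hXS]
    exact memP _
  -- multiplication by generators preserves P on basis monomials
  have gz : ∀ x ∈ P, z * x ∈ P := by
    intro x hx
    induction hx using Submodule.span_induction with
    | mem x hx =>
      obtain ⟨⟨k, m, n, l⟩, rfl⟩ := hx
      rw [hXS, S4Aux2.Mz hrel]
      exact memP' _ _ _ _
    | zero => simpa using P.zero_mem
    | add x y hx hy ihx ihy => rw [mul_add]; exact P.add_mem ihx ihy
    | smul c x hx ihx => rw [mul_smul_comm]; exact P.smul_mem c ihx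
  have gb : ∀ x ∈ P, β * x ∈ P := by
    intro x hx
    induction hx using Submodule.span_induction with
    | mem x hx =>
      obtain ⟨⟨k, m, n, l⟩, rfl⟩ := hx
      rw [hXS, S4Aux2.Mb hrel hq]
      exact P.smul_mem _ (memP' _ _ _ _)
    | zero => simpa using P.zero_mem
    | add x y hx hy ihx ihy => rw [mul_add]; exact P.add_mem ihx ihy
    | smul c x hx ihx => rw [mul_smul_comm]; exact P.smul_mem c ihx
  have gbs : ∀ x ∈ P, star β * x ∈ P := by
    intro x hx
    induction hx using Submodule.span_induction with
    | mem x hx =>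
      obtain ⟨⟨k, m, n, l⟩, rfl⟩ := hx
      rw [hXS, S4Aux2.Mbs hrel hq]
      exact P.smul_mem _ (memP' _ _ _ _)
    | zero => simpa using P.zero_mem
    | add x y hx hy ihx ihy => rw [mul_add]; exact P.add_mem ihx ihy
    | smul c x hx ihx => rw [mul_smul_comm]; exact P.smul_mem c ihx
  have gas : ∀ x ∈ P, star α * x ∈ P := by
    intro x hx
    induction hx using Submodule.span_induction with
    | mem x hx =>
      obtain ⟨⟨k, m, n, l⟩, rfl⟩ := hx
      rw [hXS]
      by_cases hk : 0 ≤ k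
      · rw [S4Aux2.Mas_pos hrel hk]
        exact memP' _ _ _ _
      · rw [S4Aux2.Mas_neg hrel hq (by omega)]
        exact P.sub_mem (P.sub_mem (memP' _ _ _ _) (P.smul_mem _ (memP' _ _ _ _)))
          (memP' _ _ _ _)
    | zero => simpa using P.zero_mem
    | add x y hx hy ihx ihy => rw [mul_add]; exact P.add_mem ihx ihy
    | smul c x hx ihx => rw [mul_smul_comm]; exact P.smul_mem c ihx
  have ga : ∀ x ∈ P, α * x ∈ P := by
    intro x hx
    induction hx using Submodule.span_induction with
    | mem x hx =>
      obtain ⟨⟨k, m, n, l⟩, rfl⟩ := hx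
      rw [hXS]
      by_cases hk : k ≤ 0
      · rw [S4Aux2.Ma_neg hrel hq hk]
        exact memP' _ _ _ _
      · rw [S4Aux2.Ma_pos hrel hq (by omega)]
        exact P.sub_mem (P.sub_mem (memP' _ _ _ _) (P.smul_mem _ (memP' _ _ _ _)))
          (memP' _ _ _ _)
    | zero => simpa using P.zero_mem
    | add x y hx hy ihx ihy => rw [mul_add]; exact P.add_mem ihx ihy
    | smul c x hx ihx => rw [mul_smul_comm]; exact P.smul_mem c ihx
  have honeP : (1 : A) ∈ P := by
    have h1 : a (0, 0, 0, 0) = 1 := by simp [ha]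
    rw [← h1]; exact memP _
  -- the star subalgebra generated by the generators is everything
  have htop : StarAlgebra.adjoin ℂ ({α, β, z} : Set A) = ⊤ := by
    set T := StarAlgebra.adjoin ℂ ({α, β, z} : Set A) with hT
    have hmα : α ∈ T := StarAlgebra.subset_adjoin ℂ _ (by simp)
    have hmβ : β ∈ T := StarAlgebra.subset_adjoin ℂ _ (by simp)
    have hmz : z ∈ T := StarAlgebra.subset_adjoin ℂ _ (by simp)
    have hrelT : S4Rel q (⟨α, hmα⟩ : T) ⟨β, hmβ⟩ ⟨z, hmz⟩ := by
      obtain ⟨h1, h2, h3, h4, h5, h6, h7, h8⟩ := hrel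
      refine ⟨?_, ?_, ?_, ?_, ?_, ?_, ?_, ?_⟩ <;>
        · apply Subtype.ext
          push_cast
          assumption
    obtain ⟨φT, hφT, -⟩ := huniv T _ _ _ hrelT
    obtain ⟨ψ, -, hψu⟩ := huniv A α β z hrel
    have e1 : T.subtype.comp φT = ψ := by
      refine hψu _ ⟨?_, ?_, ?_⟩ <;>
        simp [StarAlgHom.comp_apply, hφT.1, hφT.2.1, hφT.2.2, StarSubalgebra.subtype]
    have e2 : StarAlgHom.id ℂ A = ψ := hψu _ ⟨rfl, rfl, rfl⟩
    rw [eq_top_iff]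
    intro x _
    have hx : (T.subtype.comp φT) x = x := by rw [e1, ← e2]; rfl
    have : ((φT x : T) : A) ∈ T := (φT x).2
    rwa [show ((φT x : T) : A) = x from hx] at this
  have main : ∀ x : A, ∀ y ∈ P, x * y ∈ P := by
    intro x
    have hx : x ∈ Algebra.adjoin ℂ (({α, β, z} : Set A) ∪ star {α, β, z}) := by
      rw [← StarAlgebra.adjoin_toSubalgebra, htop]
      simp [StarSubalgebra.mem_toSubalgebra]
    induction hx using Algebra.adjoin_induction with
    | mem g hg =>
      rcases hg with hg | hg
      · rcases hg with rfl | rfl | rfl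
        · exact ga
        · exact gb
        · exact gz
      · rw [Set.mem_star] at hg
        rcases hg with h' | h' | h'
        · intro y hy
          rw [show g = star α by rw [← h', star_star]]
          exact gas y hy
        · intro y hy
          rw [show g = star β by rw [← h', star_star]]
          exact gbs y hy
        · intro y hy
          rw [show g = z by rw [← hrel.1, ← h', star_star]]
          exact gz y hy
    | algebraMap c =>
      intro y hy
      rw [← Algebra.smul_def]
      exact P.smul_mem c hy
    | add u v hu hv ihu ihv =>
      intro y hy
      rw [add_mul]
      exact P.add_mem (ihu y hy) (ihv y hy)
    | mul u v hu hv ihu ihv =>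
      intro y hy
      rw [mul_assoc]
      exact ihu _ (ihv y hy)
  rw [eq_top_iff]
  intro x _
  have := main x 1 honeP
  rwa [mul_one] at this
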